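/- With notation as in the isomorphism P between ℚ∧^r_{ℤ[G]}M and ℚ(M,G)_⋆^r: the map Q : ℚ(M,G)_⋆^r → ℚ∧^r_{ℤ[G]}M defined as the restriction of Q̄(m_1⊗⋯⊗m_r⊗[σ]) = (1/((#G)^r · r!)) m_1∧⋯∧m_{r-1}∧(σ·m_r) satisfies Q ∘ P = id on ℚ∧^r_{ℤ[G]}M. -/

import Mathlib

open MonoidAlgebra TensorProduct

/-- The generator `m_1 ∧ ⋯ ∧ m_r` of the `r`-th exterior power `⋀[R]^r M`. -/
noncomputable def wedgeGen {R M : Type*} [CommRing R] [AddCommGroup M] [Module R M]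
    (r : ℕ) (m : Fin r → M) : ⋀[R]^r M :=
  ⟨ExteriorAlgebra.ιMulti R r m, ExteriorAlgebra.ιMulti_range R r (Set.mem_range_self m)⟩

section aux
variable {R M : Type*} [CommRing R] [AddCommGroup M] [Module R M] {r : ℕ}

lemma wedgeGen_coe (m : Fin r → M) :
    (wedgeGen (R := R) r m : ExteriorAlgebra R M) = ExteriorAlgebra.ιMulti R r m := rfl

lemma wedgeGen_update_smul (m : Fin r → M) (i : Fin r) (c : R) (x : M) :
    wedgeGen (R := R) r (Function.update m i (c • x)) =
      c • wedgeGen (R := R) r (Function.update m i x) := by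
  apply Subtype.ext
  rw [Submodule.coe_smul, wedgeGen_coe, wedgeGen_coe,
    AlternatingMap.map_update_smul]

lemma wedgeGen_smul_self (m : Fin r → M) (i : Fin r) (c : R) :
    wedgeGen (R := R) r (Function.update m i (c • m i)) = c • wedgeGen (R := R) r m := by
  rw [wedgeGen_update_smul, Function.update_eq_self]

lemma wedgeGen_smul_univ (c : Fin r → R) (m : Fin r → M) :
    wedgeGen (R := R) r (fun j => c j • m j) = (∏ j, c j) • wedgeGen (R := R) r m := by
  apply Subtype.ext
  rw [Submodule.coe_smul, wedgeGen_coe, wedgeGen_coe]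
  exact (ExteriorAlgebra.ιMulti R r).toMultilinearMap.map_smul_univ c m

lemma wedgeGen_perm (m : Fin r → M) (f : Equiv.Perm (Fin r)) :
    wedgeGen (R := R) r (m ∘ f) = (Equiv.Perm.sign f : ℤ) • wedgeGen (R := R) r m := by
  apply Subtype.ext
  rw [Submodule.coe_smul_of_tower, wedgeGen_coe, wedgeGen_coe,
    AlternatingMap.map_perm, Units.smul_def]

end aux

lemma wedgeGen_span {R M : Type*} [CommRing R] [AddCommGroup M] [Module R M]
    (r : ℕ) (hr : 0 < r) :
    Submodule.span ℤ (Set.range (fun m : Fin r → M => wedgeGen (R := R) r m)) = ⊤ := by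
  set T := Submodule.span ℤ (Set.range (fun m : Fin r → M => wedgeGen (R := R) r m)) with hT
  have hsmul : ∀ (a : R) (x : ↥(⋀[R]^r M)), x ∈ T → a • x ∈ T := by
    intro a x hx
    refine Submodule.span_induction (p := fun x _ => a • x ∈ T) ?_ ?_ ?_ ?_ hx
    · rintro _ ⟨m, rfl⟩
      rw [← wedgeGen_smul_self m ⟨0, hr⟩ a]
      exact Submodule.subset_span ⟨_, rfl⟩
    · show a • (0 : ↥(⋀[R]^r M)) ∈ T
      rw [smul_zero]; exact zero_mem T
    · intro x y _ _ hx hy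
      show a • (x + y) ∈ T
      rw [smul_add]; exact add_mem hx hy
    · intro n x _ hx
      show a • (n • x) ∈ T
      rw [smul_comm]; exact Submodule.smul_mem T n hx
  rw [eq_top_iff]
  rintro ⟨y, hy⟩ -
  have hy' : y ∈ Submodule.span R (Set.range (ExteriorAlgebra.ιMulti R r (M := M))) := by
    rw [ExteriorAlgebra.ιMulti_span_fixedDegree]; exact hy
  have main : ∀ y (hy : y ∈ Submodule.span R (Set.range (ExteriorAlgebra.ιMulti R r (M := M))))
      (h : y ∈ ⋀[R]^r M), (⟨y, h⟩ : ↥(⋀[R]^r M)) ∈ T := by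
    intro y hy
    refine Submodule.span_induction
      (p := fun y _ => ∀ h : y ∈ ⋀[R]^r M, (⟨y, h⟩ : ↥(⋀[R]^r M)) ∈ T) ?_ ?_ ?_ ?_ hy
    · rintro _ ⟨m, rfl⟩ h
      exact Submodule.subset_span ⟨m, rfl⟩
    · intro h
      have : (⟨0, h⟩ : ↥(⋀[R]^r M)) = 0 := rfl
      rw [this]; exact zero_mem T
    · intro x y hx hy ihx ihy h
      have hx' : x ∈ ⋀[R]^r M := ExteriorAlgebra.ιMulti_span_fixedDegree R (M := M) r ▸ hx
      have hy' : y ∈ ⋀[R]^r M := ExteriorAlgebra.ιMulti_span_fixedDegree R (M := M) r ▸ hy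
      have : (⟨x + y, h⟩ : ↥(⋀[R]^r M)) = ⟨x, hx'⟩ + ⟨y, hy'⟩ := rfl
      rw [this]; exact add_mem (ihx hx') (ihy hy')
    · intro a x hx ihx h
      have hx' : x ∈ ⋀[R]^r M := ExteriorAlgebra.ιMulti_span_fixedDegree R (M := M) r ▸ hx
      have : (⟨a • x, h⟩ : ↥(⋀[R]^r M)) = a • ⟨x, hx'⟩ := rfl
      rw [this]; exact hsmul a _ (ihx hx')
  exact main y hy' hy


set_option maxHeartbeats 2000000 in
set_option synthInstance.maxHeartbeats 400000 in
/-- with `P(m_1∧⋯∧m_r) = Σ_f sgn(f) ⊗_j (Σ_σ σ⁻¹m_{f(j)}[σ])` and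
`Q̄(m_1⊗⋯⊗m_r⊗[τ]) = (1/((#G)^r·r!)) m_1∧⋯∧m_{r-1}∧(τ·m_r)`, the composite `Q̄ ∘ P` is the
identity on `ℚ ∧^r_{ℤ[G]} M`. -/
theorem stmt9 (G : Type) [CommGroup G] [Fintype G] [DecidableEq G]
    (M : Type) [AddCommGroup M] [Module (MonoidAlgebra ℤ G) M]
    [Module.Finite (MonoidAlgebra ℤ G) M] [Module.Free ℤ M]
    (r : ℕ) (hr : 0 < r)
    (P : (ℚ ⊗[ℤ] (↥(⋀[MonoidAlgebra ℤ G]^r M))) →ₗ[ℚ]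
      (ℚ ⊗[ℤ] ((G →₀ (⨂[ℤ] (_ : Fin r), M)))))
    (hP : ∀ m : Fin r → M,
      P ((1 : ℚ) ⊗ₜ[ℤ] wedgeGen (R := MonoidAlgebra ℤ G) r m) =
        ∑ f : Equiv.Perm (Fin r), ∑ σ : Fin r → G,
          ((Equiv.Perm.sign f : ℤ) •
            ((1 : ℚ) ⊗ₜ[ℤ] (Finsupp.single (∏ j, σ j)
              (PiTensorProduct.tprod ℤ
                (fun j => (MonoidAlgebra.of ℤ G (σ j)⁻¹) • m (f j)))))))
    (Q : (ℚ ⊗[ℤ] ((G →₀ (⨂[ℤ] (_ : Fin r), M)))) →ₗ[ℚ]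
      (ℚ ⊗[ℤ] (↥(⋀[MonoidAlgebra ℤ G]^r M))))
    (hQ : ∀ (τ : G) (m : Fin r → M),
      Q ((1 : ℚ) ⊗ₜ[ℤ] Finsupp.single τ (PiTensorProduct.tprod ℤ m)) =
        (((Fintype.card G : ℚ) ^ r * (r.factorial : ℚ))⁻¹) •
          ((1 : ℚ) ⊗ₜ[ℤ] wedgeGen (R := MonoidAlgebra ℤ G) r
            (Function.update m ⟨r - 1, by omega⟩
              ((MonoidAlgebra.of ℤ G τ) • m ⟨r - 1, by omega⟩)))) :
    ∀ x : ℚ ⊗[ℤ] (↥(⋀[MonoidAlgebra ℤ G]^r M)), Q (P x) = x := by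
  classical
  set c : ℚ := (Fintype.card G : ℚ) ^ r * (r.factorial : ℚ) with hc
  have hc0 : c ≠ 0 := by
    have : (0:ℚ) < (Fintype.card G : ℚ) := by
      exact_mod_cast Fintype.card_pos
    positivity
  -- key computation on generators
  have key : ∀ m : Fin r → M,
      Q (P ((1:ℚ) ⊗ₜ[ℤ] wedgeGen (R := MonoidAlgebra ℤ G) r m)) = (1:ℚ) ⊗ₜ[ℤ] wedgeGen (R := MonoidAlgebra ℤ G) r m := by
    intro m
    rw [hP, map_sum]
    have hterm : ∀ f : Equiv.Perm (Fin r), ∀ σ : Fin r → G,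
        Q ((Equiv.Perm.sign f : ℤ) • ((1:ℚ) ⊗ₜ[ℤ] (Finsupp.single (∏ j, σ j)
            (PiTensorProduct.tprod ℤ
              (fun j => (MonoidAlgebra.of ℤ G (σ j)⁻¹) • m (f j)))))) =
          c⁻¹ • ((1:ℚ) ⊗ₜ[ℤ] wedgeGen (R := MonoidAlgebra ℤ G) r m) := by
      intro f σ
      rw [map_zsmul, hQ]
      have h1 : wedgeGen (R := MonoidAlgebra ℤ G) r
          (Function.update (fun j => (MonoidAlgebra.of ℤ G (σ j)⁻¹) • m (f j)) ⟨r - 1, by omega⟩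
            ((MonoidAlgebra.of ℤ G (∏ j, σ j)) •
              (fun j => (MonoidAlgebra.of ℤ G (σ j)⁻¹) • m (f j)) ⟨r - 1, by omega⟩)) =
          (Equiv.Perm.sign f : ℤ) • wedgeGen (R := MonoidAlgebra ℤ G) r m := by
        rw [wedgeGen_smul_self]
        have h2 : (fun j => (MonoidAlgebra.of ℤ G (σ j)⁻¹) • m (f j)) =
            fun j => (MonoidAlgebra.of ℤ G ((σ j)⁻¹)) • (m ∘ f) j := rfl
        rw [h2, wedgeGen_smul_univ, wedgeGen_perm, smul_comm, smul_smul]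
        have h3 : (∏ j, MonoidAlgebra.of ℤ G ((σ j)⁻¹)) * (MonoidAlgebra.of ℤ G (∏ j, σ j))
            = 1 := by
          rw [← map_prod, ← map_mul, Finset.prod_inv_distrib, inv_mul_cancel, map_one]
        rw [h3, one_smul]
      rw [h1, tmul_smul, smul_comm ((Equiv.Perm.sign f : ℤ)) c⁻¹,
        smul_smul ((Equiv.Perm.sign f : ℤ)), ← Units.val_mul, Int.units_mul_self,
        Units.val_one, one_smul]
    simp_rw [map_sum, hterm]
    rw [Finset.sum_const, Finset.sum_const, Finset.card_univ, Finset.card_univ,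
      ← Nat.cast_smul_eq_nsmul ℚ, ← Nat.cast_smul_eq_nsmul ℚ, smul_smul, smul_smul]
    have hcoef : (Fintype.card (Equiv.Perm (Fin r)) : ℚ) *
        (Fintype.card (Fin r → G) : ℚ) * c⁻¹ = 1 := by
      rw [Fintype.card_perm, Fintype.card_fun, Fintype.card_fin, hc]
      push_cast
      field_simp
    rw [hcoef, one_smul]
  -- extend to all of the span
  have key2 : ∀ n : ↥(⋀[MonoidAlgebra ℤ G]^r M), Q (P ((1:ℚ) ⊗ₜ[ℤ] n)) = (1:ℚ) ⊗ₜ[ℤ] n := by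
    intro n
    have hn : n ∈ Submodule.span ℤ (Set.range (fun m : Fin r → M => wedgeGen (R := MonoidAlgebra ℤ G) r m)) := by
      rw [wedgeGen_span r hr]; trivial
    refine Submodule.span_induction
      (p := fun n _ => Q (P ((1:ℚ) ⊗ₜ[ℤ] n)) = (1:ℚ) ⊗ₜ[ℤ] n) ?_ ?_ ?_ ?_ hn
    · rintro _ ⟨m, rfl⟩; exact key m
    · show Q (P ((1:ℚ) ⊗ₜ[ℤ] (0 : ↥(⋀[MonoidAlgebra ℤ G]^r M)))) = (1:ℚ) ⊗ₜ[ℤ] (0 : ↥(⋀[MonoidAlgebra ℤ G]^r M))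
      rw [tmul_zero, map_zero, map_zero]
    · intro x y _ _ ihx ihy
      show Q (P ((1:ℚ) ⊗ₜ[ℤ] (x + y))) = (1:ℚ) ⊗ₜ[ℤ] (x + y)
      rw [tmul_add, map_add, map_add, ihx, ihy]
    · intro a x _ ihx
      show Q (P ((1:ℚ) ⊗ₜ[ℤ] (a • x))) = (1:ℚ) ⊗ₜ[ℤ] (a • x)
      rw [tmul_smul, map_zsmul, map_zsmul, ihx]
  intro x
  induction x using TensorProduct.induction_on with
  | zero => rw [map_zero, map_zero]
  | tmul q n =>
      have : q ⊗ₜ[ℤ] n = q • ((1:ℚ) ⊗ₜ[ℤ] n) := by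
        rw [smul_tmul', smul_eq_mul, mul_one]
      rw [this, map_smul, map_smul, key2]
  | add x y ihx ihy => rw [map_add, map_add, ihx, ihy]
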